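/- Let R be a commutative ring and (M, φ) a symmetric bilinear space over R. Then the following are equivalent: (1) (M, φ) is metabolic, i.e., there exists a direct summand N ⊆ M with N = N^⊥; (2) M contains an isotropic direct summand of half rank, i.e., there exists a direct summand N ⊆ M with φ(N, N) = 0 and such that for every prime ideal p of R, the rank of the free R_p-module M_p is twice the rank of N_p. -/

import Mathlib

open TensorProduct

universe u

/-- A symmetric bilinear space over a commutative ring `R`: a finitely generated projective
`R`-module together with a symmetric bilinear form inducing an isomorphism onto the dual. -/
structure SymBilSpace (R : Type u) [CommRing R] : Type (u + 1) where
  M : Type u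
  [isAddCommGroup : AddCommGroup M]
  [isModule : Module R M]
  projective : Module.Projective R M
  finite : Module.Finite R M
  form : M →ₗ[R] M →ₗ[R] R
  symm : ∀ x y, form x y = form y x
  nondeg : Function.Bijective fun x ↦ form x

attribute [instance] SymBilSpace.isAddCommGroup SymBilSpace.isModule

namespace SymBilSpace

variable {R : Type u} [CommRing R]

/-- Isometry of symmetric bilinear spaces. -/
def Isometric (V W : SymBilSpace R) : Prop :=
  ∃ e : V.M ≃ₗ[R] W.M, ∀ x y, W.form (e x) (e y) = V.form x y

/-- Orthogonal direct sum of symmetric bilinear spaces. -/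
noncomputable def orthSum (V W : SymBilSpace R) : SymBilSpace R where
  M := V.M × W.M
  projective := by have := V.projective; have := W.projective; infer_instance
  finite := by have := V.finite; have := W.finite; infer_instance
  form := V.form.compl₁₂ (LinearMap.fst R V.M W.M) (LinearMap.fst R V.M W.M)
        + W.form.compl₁₂ (LinearMap.snd R V.M W.M) (LinearMap.snd R V.M W.M)
  symm := by
    intro x y
    simp only [LinearMap.add_apply, LinearMap.compl₁₂_apply, LinearMap.fst_apply,
      LinearMap.snd_apply]
    rw [V.symm x.1 y.1, W.symm x.2 y.2]
  nondeg := by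
    have key : (fun x ↦ (V.form.compl₁₂ (LinearMap.fst R V.M W.M) (LinearMap.fst R V.M W.M)
          + W.form.compl₁₂ (LinearMap.snd R V.M W.M) (LinearMap.snd R V.M W.M)) x)
        = (Module.dualProdDualEquivDual R V.M W.M) ∘
            (Prod.map (fun x ↦ V.form x) (fun y ↦ W.form y)) := by
      funext x
      ext y
      · simp [Module.dualProdDualEquivDual]
      · simp [Module.dualProdDualEquivDual]
    rw [key]
    exact (Module.dualProdDualEquivDual R V.M W.M).bijective.comp
      (V.nondeg.prodMap W.nondeg)

/-- The rank one symmetric bilinear space `⟨a⟩` associated to a unit `a`, given by the form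
`(x, y) ↦ a * x * y` on `R`. -/
noncomputable def unit (R : Type u) [CommRing R] (a : Rˣ) : SymBilSpace R where
  M := R
  projective := inferInstance
  finite := inferInstance
  form := LinearMap.mk₂ R (fun x y => (a : R) * x * y)
    (fun x x' y => by ring) (fun c x y => by simp [smul_eq_mul]; ring)
    (fun x y y' => by ring) (fun c x y => by simp [smul_eq_mul]; ring)
  symm := fun x y => by simp [LinearMap.mk₂_apply]; ring
  nondeg := by
    constructor
    · intro x y h
      have h1 : (a : R) * x * 1 = (a : R) * y * 1 := by
        have := congrArg (fun f : R →ₗ[R] R => f 1) h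
        simpa [LinearMap.mk₂_apply] using this
      have h2 : (a : R) * x = (a : R) * y := by simpa using h1
      calc x = (a⁻¹ : Rˣ) * ((a : R) * x) := by
                rw [← mul_assoc, Units.inv_mul, one_mul]
        _ = (a⁻¹ : Rˣ) * ((a : R) * y) := by rw [h2]
        _ = y := by rw [← mul_assoc, Units.inv_mul, one_mul]
    · intro f
      refine ⟨(a⁻¹ : Rˣ) * f 1, ?_⟩
      apply LinearMap.ext
      intro y
      have : f y = y * f 1 := by
        conv_lhs => rw [← mul_one y, ← smul_eq_mul, map_smul, smul_eq_mul]
      simp only [LinearMap.mk₂_apply]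
      rw [this]
      rw [show (a : R) * ((a⁻¹ : Rˣ) * f 1) * y = ((a : R) * (a⁻¹ : Rˣ)) * (f 1 * y) by ring,
        Units.mul_inv, one_mul, mul_comm]

/-- The hyperbolic plane over `R`: `R²` with the form of Gram matrix `[[0,1],[1,0]]`. -/
noncomputable def hyperbolic (R : Type u) [CommRing R] : SymBilSpace R where
  M := R × R
  projective := inferInstance
  finite := inferInstance
  form := LinearMap.mk₂ R (fun x y => x.1 * y.2 + x.2 * y.1)
    (fun x x' y => by simp [Prod.fst_add, Prod.snd_add]; ring)
    (fun c x y => by simp [Prod.smul_fst, Prod.smul_snd, smul_eq_mul]; ring)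
    (fun x y y' => by simp [Prod.fst_add, Prod.snd_add]; ring)
    (fun c x y => by simp [Prod.smul_fst, Prod.smul_snd, smul_eq_mul]; ring)
  symm := fun x y => by simp [LinearMap.mk₂_apply]; ring
  nondeg := by
    constructor
    · intro x y h
      have h1 := congrArg (fun f : R × R →ₗ[R] R => f (1, 0)) h
      have h2 := congrArg (fun f : R × R →ₗ[R] R => f (0, 1)) h
      simp only [LinearMap.mk₂_apply, mul_zero, mul_one, zero_add, add_zero] at h1 h2
      exact Prod.ext h2 h1
    · intro f
      refine ⟨(f (0, 1), f (1, 0)), ?_⟩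
      apply LinearMap.ext
      intro y
      have hy : y = y.1 • ((1 : R), (0 : R)) + y.2 • ((0 : R), (1 : R)) := by
        ext <;> simp
      have hfy : f y = y.1 * f (1, 0) + y.2 * f (0, 1) := by
        conv_lhs => rw [hy]
        rw [map_add, map_smul, map_smul, smul_eq_mul, smul_eq_mul]
      simp only [LinearMap.mk₂_apply]
      rw [hfy]
      ring

end SymBilSpace

/-- The defining relations of the Grothendieck-Witt group: the class of an orthogonal sum is
the sum of the classes, and isometric spaces have equal classes. -/
def gwRelation (R : Type u) [CommRing R] :
    FreeAbelianGroup (SymBilSpace R) → FreeAbelianGroup (SymBilSpace R) → Prop := fun x y =>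
  (∃ V W : SymBilSpace R, x = FreeAbelianGroup.of (V.orthSum W) ∧
      y = FreeAbelianGroup.of V + FreeAbelianGroup.of W) ∨
  (∃ V W : SymBilSpace R, V.Isometric W ∧ x = FreeAbelianGroup.of V ∧
      y = FreeAbelianGroup.of W)

/-- The additive congruence generated by the Grothendieck-Witt relations. -/
def gwCon (R : Type u) [CommRing R] : AddCon (FreeAbelianGroup (SymBilSpace R)) :=
  addConGen (gwRelation R)

/-- The Grothendieck-Witt group of a commutative ring: the group completion of the monoid of
isometry classes of symmetric bilinear spaces under orthogonal direct sum. -/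
def GW (R : Type u) [CommRing R] : Type (u + 1) := (gwCon R).Quotient

noncomputable instance (R : Type u) [CommRing R] : AddCommGroup (GW R) :=
  { (inferInstance : AddGroup ((gwCon R).Quotient)) with
    add_comm := fun a b => AddCon.induction_on₂ a b fun x y => by
      show ((x + y : FreeAbelianGroup (SymBilSpace R)) : (gwCon R).Quotient) = ↑(y + x)
      rw [add_comm] }

/-- The Grothendieck-Witt class of a symmetric bilinear space. -/
def GWclass {R : Type u} [CommRing R] (V : SymBilSpace R) : GW R :=
  (gwCon R).mk' (FreeAbelianGroup.of V)

/-- The orthogonal complement of a submodule with respect to a bilinear form. -/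
def orthComp {R : Type u} [CommRing R] {M : Type u} [AddCommGroup M] [Module R M]
    (φ : M →ₗ[R] M →ₗ[R] R) (N : Submodule R M) : Submodule R M where
  carrier := {m | ∀ n ∈ N, φ m n = 0}
  add_mem' := fun {x y} hx hy => by
    intro n hn
    simp [hx n hn, hy n hn]
  zero_mem' := by intro n hn; simp
  smul_mem' := fun c x hx => by
    intro n hn
    simp [hx n hn]

/-- A bilinear pairing between two modules is perfect if both induced maps to the duals
are bijective. -/
def IsPerfect {R : Type u} [CommRing R] {P Q : Type u} [AddCommGroup P] [Module R P]
    [AddCommGroup Q] [Module R Q] (β : P →ₗ[R] Q →ₗ[R] R) : Prop :=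
  (Function.Bijective fun x ↦ β x) ∧ (Function.Bijective fun y ↦ β.flip y)

/-- The hyperbolic-type symmetric bilinear space on `P ⊕ Q` associated to a perfect pairing
`β : P × Q → R`, with form `((x,y),(x',y')) ↦ β x y' + β x' y`. -/
noncomputable def hypPair {R : Type u} [CommRing R] {P Q : Type u} [AddCommGroup P] [Module R P]
    [AddCommGroup Q] [Module R Q] (hP : Module.Projective R P) (hP' : Module.Finite R P)
    (hQ : Module.Projective R Q) (hQ' : Module.Finite R Q)
    (β : P →ₗ[R] Q →ₗ[R] R) (hβ : IsPerfect β) : SymBilSpace R where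
  M := P × Q
  projective := by infer_instance
  finite := by infer_instance
  form := β.compl₁₂ (LinearMap.fst R P Q) (LinearMap.snd R P Q)
        + β.flip.compl₁₂ (LinearMap.snd R P Q) (LinearMap.fst R P Q)
  symm := by
    intro x y
    simp only [LinearMap.add_apply, LinearMap.compl₁₂_apply, LinearMap.fst_apply,
      LinearMap.snd_apply, LinearMap.flip_apply]
    exact add_comm _ _
  nondeg := by
    have key : (fun x ↦ (β.compl₁₂ (LinearMap.fst R P Q) (LinearMap.snd R P Q)
          + β.flip.compl₁₂ (LinearMap.snd R P Q) (LinearMap.fst R P Q)) x)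
        = (Module.dualProdDualEquivDual R P Q) ∘
            (Prod.map (fun y ↦ β.flip y) (fun x ↦ β x)) ∘ ⇑(Equiv.prodComm P Q) := by
      funext x
      ext y
      · simp [Module.dualProdDualEquivDual]
      · simp [Module.dualProdDualEquivDual]
    rw [key]
    exact (Module.dualProdDualEquivDual R P Q).bijective.comp
      ((hβ.2.prodMap hβ.1).comp (Equiv.prodComm P Q).bijective)

section StatementFiveAux

open Module

variable {R : Type} [CommRing R]

section Helpers

variable (S : Submonoid R) (Rp : Type) [CommRing Rp] [Algebra R Rp] [IsLocalization S Rp]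

/-- Upgrade an `R`-linear equivalence between `Rp`-modules to an `Rp`-linear one. -/
noncomputable def extendEquiv {A B : Type} [AddCommGroup A] [Module R A] [Module Rp A]
    [IsScalarTower R Rp A] [AddCommGroup B] [Module R B] [Module Rp B] [IsScalarTower R Rp B]
    (e : A ≃ₗ[R] B) : A ≃ₗ[Rp] B :=
  LinearEquiv.ofLinear (e.toLinearMap.extendScalarsOfIsLocalization S Rp)
    (e.symm.toLinearMap.extendScalarsOfIsLocalization S Rp)
    (by ext x; simp) (by ext x; simp)

/-- The localization of a finite projective module is finite and free over a local
localization. -/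
lemma locFiniteFree [IsLocalRing Rp] {A B : Type} [AddCommGroup A] [Module R A]
    [AddCommGroup B] [Module R B] [Module Rp B] [IsScalarTower R Rp B]
    (fB : A →ₗ[R] B) [IsLocalizedModule S fB]
    (hA1 : Module.Finite R A) (hA2 : Module.Projective R A) :
    Module.Finite Rp B ∧ Module.Free Rp B := by
  haveI : Module.FinitePresentation R A := Module.finitePresentation_of_projective R A
  haveI : Module.FinitePresentation Rp B := FinitePresentation.of_isBaseChange fB
    ((isLocalizedModule_iff_isBaseChange S Rp fB).mp inferInstance)
  haveI : Module.Projective Rp B := Module.projective_of_isLocalizedModule S fB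
  exact ⟨inferInstance, Module.free_of_flat_of_isLocalRing⟩

/-- A finite free module of rank zero over a nontrivial ring is trivial. -/
lemma subsingleton_of_finrank_zero {T W : Type} [CommRing T] [Nontrivial T] [AddCommGroup W]
    [Module T W] [Module.Free T W] [Module.Finite T W] (h : Module.finrank T W = 0) :
    Subsingleton W := by
  have hc := (Module.finrank_eq_card_chooseBasisIndex T W).symm.trans h
  haveI : IsEmpty (Module.Free.ChooseBasisIndex T W) := Fintype.card_eq_zero_iff.mp hc
  exact (Module.Free.chooseBasis T W).repr.toEquiv.subsingleton

/-- A direct summand of a finite projective module is finite and projective. -/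
lemma finite_projective_of_isCompl {M : Type} [AddCommGroup M] [Module R M]
    [Module.Finite R M] [Module.Projective R M] {N P : Submodule R M} (h : IsCompl N P) :
    Module.Finite R N ∧ Module.Projective R N :=
  ⟨Module.Finite.of_surjective (N.linearProjOfIsCompl P h)
      (fun x => ⟨x, Submodule.linearProjOfIsCompl_apply_left h x⟩),
   Module.Projective.of_split N.subtype (N.linearProjOfIsCompl P h)
      (Submodule.linearProjOfIsCompl_comp_subtype h)⟩

/-- The kernel of a split surjection out of a finite projective module is finite and
projective. -/
lemma ker_finite_projective {M B : Type} [AddCommGroup M] [Module R M] [AddCommGroup B]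
    [Module R B] [Module.Finite R M] [Module.Projective R M]
    (f : M →ₗ[R] B) (σ : B →ₗ[R] M) (hσ : f ∘ₗ σ = LinearMap.id) :
    Module.Finite R ↥(LinearMap.ker f) ∧ Module.Projective R ↥(LinearMap.ker f) := by
  let g : M →ₗ[R] M := LinearMap.id - σ ∘ₗ f
  have hmem : ∀ x : M, g x ∈ LinearMap.ker f := by
    intro x
    have : f (σ (f x)) = f x := LinearMap.congr_fun hσ (f x)
    simp [g, LinearMap.mem_ker, this]
  let ρ : M →ₗ[R] ↥(LinearMap.ker f) :=
    LinearMap.codRestrict (LinearMap.ker f) g hmem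
  have hρ : ∀ x : ↥(LinearMap.ker f), ρ x = x := by
    intro x
    ext
    have hx : f (x : M) = 0 := x.2
    simp [ρ, g, hx]
  exact ⟨Module.Finite.of_surjective ρ (fun x => ⟨x, hρ x⟩),
    Module.Projective.of_split (LinearMap.ker f).subtype ρ (LinearMap.ext hρ)⟩

end Helpers

/-- Rank additivity and triviality criterion for the kernel of a split surjection over a
local ring. -/
lemma finrank_ker_add_of_split {T M B : Type} [CommRing T] [IsLocalRing T]
    [AddCommGroup M] [Module T M] [AddCommGroup B] [Module T B]
    [Module.Finite T M] [Module.Free T M] [Module.Finite T B] [Module.Free T B]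
    (f : M →ₗ[T] B) (σ : B →ₗ[T] M) (hσ : f ∘ₗ σ = LinearMap.id) :
    Module.finrank T M = Module.finrank T ↥(LinearMap.ker f) + Module.finrank T B
    ∧ (Module.finrank T ↥(LinearMap.ker f) = 0 → LinearMap.ker f = ⊥) := by
  obtain ⟨hfin, hproj⟩ := ker_finite_projective f σ hσ
  haveI := hfin; haveI := hproj
  haveI : Module.FinitePresentation T ↥(LinearMap.ker f) :=
    Module.finitePresentation_of_projective _ _
  haveI : Module.Free T ↥(LinearMap.ker f) := Module.free_of_flat_of_isLocalRing
  have e := ((LinearMap.exact_subtype_ker_map f).splitSurjectiveEquiv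
      (Submodule.injective_subtype _) ⟨σ, hσ⟩).1
  constructor
  · rw [e.finrank_eq, Module.finrank_prod]
  · intro h0
    haveI := subsingleton_of_finrank_zero h0
    rw [eq_bot_iff]
    intro x hx
    have : (⟨x, hx⟩ : ↥(LinearMap.ker f)) = 0 := Subsingleton.elim _ _
    simpa [Submodule.mem_bot] using congrArg Subtype.val this

namespace SymBilSpace

variable (V : SymBilSpace R)

/-- The map `M → N*` induced by the form. -/
noncomputable def psi (N : Submodule R V.M) : V.M →ₗ[R] Module.Dual R N :=
  V.form.compl₂ N.subtype

lemma ker_psi (N : Submodule R V.M) : LinearMap.ker (V.psi N) = orthComp V.form N := by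
  ext m
  simp only [LinearMap.mem_ker]
  constructor
  · intro hm n hn
    have := LinearMap.congr_fun hm ⟨n, hn⟩
    simpa [psi] using this
  · intro hm
    ext n
    simpa [psi] using hm n n.2

lemma psi_surjective {N P : Submodule R V.M} (h : IsCompl N P) :
    Function.Surjective (V.psi N) := by
  intro φf
  obtain ⟨m, hm⟩ := V.nondeg.2 (φf ∘ₗ N.projectionOnto P h)
  have hm' : V.form m = φf ∘ₗ N.projectionOnto P h := hm
  refine ⟨m, ?_⟩
  ext n
  simp [psi, hm', Submodule.projectionOnto_apply_left h n]


set_option maxHeartbeats 1000000 in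
set_option synthInstance.maxHeartbeats 100000 in
lemma rank_add {N P : Submodule R V.M} (h : IsCompl N P) (p : Ideal R) [p.IsPrime] :
    Module.finrank (Localization.AtPrime p) (LocalizedModule p.primeCompl V.M)
      = Module.finrank (Localization.AtPrime p)
          (LocalizedModule p.primeCompl ↥(orthComp V.form N))
        + Module.finrank (Localization.AtPrime p) (LocalizedModule p.primeCompl ↥N) := by
  haveI := V.projective
  haveI := V.finite
  obtain ⟨hNfin, hNproj⟩ := finite_projective_of_isCompl h
  haveI := hNfin; haveI := hNproj
  rw [← V.ker_psi N]
  set S := p.primeCompl with hS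
  set Rp := Localization.AtPrime p with hRp
  set ψ := V.psi N with hψdef
  obtain ⟨σ, hσ⟩ := Module.projective_lifting_property ψ LinearMap.id (V.psi_surjective h)
  obtain ⟨hKfin, hKproj⟩ := ker_finite_projective ψ σ hσ
  set K := LinearMap.ker ψ with hKdef
  set D := Module.Dual R ↥N with hDdef
  set f := LocalizedModule.mkLinearMap S V.M with hfdef
  set g := LocalizedModule.mkLinearMap S D with hgdef
  obtain ⟨i1, i2⟩ := locFiniteFree S Rp (B := LocalizedModule S V.M) (LocalizedModule.mkLinearMap S V.M) V.finite V.projective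
  haveI := i1; haveI := i2
  have hDfin : Module.Finite R D := inferInstance
  have hDproj : Module.Projective R D := inferInstance
  obtain ⟨i3, i4⟩ := locFiniteFree S Rp (B := LocalizedModule S D) (LocalizedModule.mkLinearMap S D) hDfin hDproj
  haveI := i3; haveI := i4
  obtain ⟨i5, i6⟩ := locFiniteFree S Rp (B := LocalizedModule S ↥K) (LocalizedModule.mkLinearMap S ↥K) hKfin hKproj
  haveI := i5; haveI := i6
  obtain ⟨i7, i8⟩ := locFiniteFree S Rp (B := LocalizedModule S ↥N) (LocalizedModule.mkLinearMap S ↥N) hNfin hNproj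
  haveI := i7; haveI := i8
  obtain ⟨i9, i10⟩ := locFiniteFree S Rp (B := ↥(K.localized' Rp S f)) (K.toLocalized' Rp S f) hKfin hKproj
  haveI := i9; haveI := i10
  set ψp := (IsLocalizedModule.map S f g ψ).extendScalarsOfIsLocalization S Rp with hψp
  set σp := (IsLocalizedModule.map S g f σ).extendScalarsOfIsLocalization S Rp with hσp
  have hsplitp : ψp ∘ₗ σp = LinearMap.id := by
    rw [hψp, hσp]
    apply LinearMap.ext
    intro y
    obtain ⟨⟨d, s⟩, rfl⟩ := IsLocalizedModule.mk'_surjective S g y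
    have hd : ψ (σ d) = d := LinearMap.congr_fun hσ d
    simp only [Function.uncurry_apply_pair, LinearMap.comp_apply,
      LinearMap.extendScalarsOfIsLocalization_apply',
      IsLocalizedModule.map_mk', LinearMap.id_apply, hd]
  have h1 := (finrank_ker_add_of_split (T := Rp)
    (M := LocalizedModule S V.M) (B := LocalizedModule S D) ψp σp hsplitp).1
  have hker : K.localized' Rp S f = LinearMap.ker ψp :=
    LinearMap.localized'_ker_eq_ker_localizedMap Rp S f g ψ
  have eK : ↥(LinearMap.ker ψp) ≃ₗ[Rp] LocalizedModule S ↥K :=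
    (LinearEquiv.ofEq _ _ hker.symm).trans
      (extendEquiv S Rp (A := ↥(K.localized' Rp S f)) (B := LocalizedModule S ↥K)
        (IsLocalizedModule.linearEquiv S (K.toLocalized' Rp S f)
          (LocalizedModule.mkLinearMap S ↥K)))
  haveI : Module.FinitePresentation R ↥N := Module.finitePresentation_of_projective R ↥N
  have eD : LocalizedModule S D ≃ₗ[Rp] Module.Dual Rp (LocalizedModule S ↥N) := by
    have e2 : LocalizedModule S D ≃ₗ[R] (LocalizedModule S ↥N →ₗ[R] Rp) :=
      IsLocalizedModule.linearEquiv S g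
        (IsLocalizedModule.map S (LocalizedModule.mkLinearMap S ↥N) (Algebra.linearMap R Rp))
    have e3 : (LocalizedModule S ↥N →ₗ[R] Rp) ≃ₗ[Rp]
        Module.Dual Rp (LocalizedModule S ↥N) :=
      LinearMap.extendScalarsOfIsLocalizationEquiv S Rp
    exact extendEquiv S Rp (A := LocalizedModule S D)
      (B := Module.Dual Rp (LocalizedModule S ↥N)) (e2.trans (e3.restrictScalars R))
  have hD : Module.finrank Rp (Module.Dual Rp (LocalizedModule S ↥N))
      = Module.finrank Rp (LocalizedModule S ↥N) := by
    classical
    let b := Module.Free.chooseBasis Rp (LocalizedModule S ↥N)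
    rw [Module.finrank_eq_card_basis b.dualBasis, Module.finrank_eq_card_basis b]
  have r1 : Module.finrank Rp ↥(LinearMap.ker ψp) = Module.finrank Rp (LocalizedModule S ↥K) :=
    LinearEquiv.finrank_eq eK
  have r2 : Module.finrank Rp (LocalizedModule S D)
      = Module.finrank Rp (Module.Dual Rp (LocalizedModule S ↥N)) :=
    LinearEquiv.finrank_eq eD
  rw [h1, r1, r2, hD]


set_option maxHeartbeats 1000000 in
set_option synthInstance.maxHeartbeats 100000 in
lemma crux {N P : Submodule R V.M} (h : IsCompl N P)
    (hiso : ∀ x ∈ N, ∀ y ∈ N, V.form x y = 0)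
    (hrank : ∀ (p : Ideal R) (_ : p.IsPrime),
      Module.finrank (Localization.AtPrime p) (LocalizedModule p.primeCompl V.M)
        = 2 * Module.finrank (Localization.AtPrime p) (LocalizedModule p.primeCompl N)) :
    N = orthComp V.form N := by
  haveI := V.projective
  haveI := V.finite
  obtain ⟨hNfin, hNproj⟩ := finite_projective_of_isCompl h
  haveI := hNfin; haveI := hNproj
  have hNK : N ≤ orthComp V.form N := fun x hx n hn => hiso x hx n hn
  apply Submodule.eq_of_localization_maximal (fun q _ => Localization.AtPrime q)
    (fun q _ => LocalizedModule q.primeCompl V.M)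
    (fun q _ => LocalizedModule.mkLinearMap q.primeCompl V.M)
  intro q hq
  haveI : q.IsPrime := hq.isPrime
  set f := LocalizedModule.mkLinearMap q.primeCompl V.M with hfdef
  have hle : N.localized' (Localization.AtPrime q) q.primeCompl f ≤ (orthComp V.form N).localized' (Localization.AtPrime q) q.primeCompl f := by
    rintro x ⟨m, hm, s, rfl⟩
    exact ⟨m, hNK hm, s, rfl⟩
  refine le_antisymm hle ?_
  -- the rank computation
  have hadd := V.rank_add h q
  have h2 := hrank q inferInstance
  rw [← V.ker_psi N] at hadd ⊢
  set ψ := V.psi N with hψdef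
  obtain ⟨σ, hσ⟩ := Module.projective_lifting_property ψ LinearMap.id (V.psi_surjective h)
  obtain ⟨hKfin, hKproj⟩ := ker_finite_projective ψ σ hσ
  set K := LinearMap.ker ψ with hKdef
  have hNK2 : N ≤ K := by rw [hKdef, V.ker_psi N]; exact hNK
  -- instances
  obtain ⟨i1, i2⟩ := locFiniteFree q.primeCompl (Localization.AtPrime q) (B := LocalizedModule q.primeCompl V.M)
    (LocalizedModule.mkLinearMap q.primeCompl V.M) V.finite V.projective
  haveI := i1; haveI := i2
  obtain ⟨i7, i8⟩ := locFiniteFree q.primeCompl (Localization.AtPrime q) (B := LocalizedModule q.primeCompl ↥N)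
    (LocalizedModule.mkLinearMap q.primeCompl ↥N) hNfin hNproj
  haveI := i7; haveI := i8
  obtain ⟨i9, i10⟩ := locFiniteFree q.primeCompl (Localization.AtPrime q) (B := ↥(K.localized' (Localization.AtPrime q) q.primeCompl f))
    (K.toLocalized' (Localization.AtPrime q) q.primeCompl f) hKfin hKproj
  haveI := i9; haveI := i10
  obtain ⟨i5, i6⟩ := locFiniteFree q.primeCompl (Localization.AtPrime q) (B := LocalizedModule q.primeCompl ↥K)
    (LocalizedModule.mkLinearMap q.primeCompl ↥K) hKfin hKproj
  haveI := i5; haveI := i6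
  -- finrank of Kl equals finrank of Np
  have eK : ↥(K.localized' (Localization.AtPrime q) q.primeCompl f) ≃ₗ[(Localization.AtPrime q)] LocalizedModule q.primeCompl ↥K :=
    extendEquiv q.primeCompl (Localization.AtPrime q) (A := ↥(K.localized' (Localization.AtPrime q) q.primeCompl f)) (B := LocalizedModule q.primeCompl ↥K)
      (IsLocalizedModule.linearEquiv q.primeCompl (K.toLocalized' (Localization.AtPrime q) q.primeCompl f)
        (LocalizedModule.mkLinearMap q.primeCompl ↥K))
  have hKN : Module.finrank (Localization.AtPrime q) ↥(K.localized' (Localization.AtPrime q) q.primeCompl f)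
      = Module.finrank (Localization.AtPrime q) (LocalizedModule q.primeCompl ↥N) := by
    have := LinearEquiv.finrank_eq eK
    omega
  -- the localized projection and inclusion
  set fN := LocalizedModule.mkLinearMap q.primeCompl ↥N with hfNdef
  set ιp := (IsLocalizedModule.map q.primeCompl fN f N.subtype).extendScalarsOfIsLocalization q.primeCompl (Localization.AtPrime q)
    with hιpdef
  set πp := (IsLocalizedModule.map q.primeCompl f fN
    (N.linearProjOfIsCompl P h)).extendScalarsOfIsLocalization q.primeCompl (Localization.AtPrime q) with hπpdef
  have hπι : πp ∘ₗ ιp = LinearMap.id := by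
    rw [hπpdef, hιpdef]
    apply LinearMap.ext
    intro y
    obtain ⟨⟨n, s⟩, rfl⟩ := IsLocalizedModule.mk'_surjective q.primeCompl fN y
    have hn : (N.linearProjOfIsCompl P h) (N.subtype n) = n :=
      Submodule.linearProjOfIsCompl_apply_left h n
    simp only [Function.uncurry_apply_pair, LinearMap.comp_apply,
      LinearMap.extendScalarsOfIsLocalization_apply',
      IsLocalizedModule.map_mk', LinearMap.id_apply, hn]
  have hrange : N.localized' (Localization.AtPrime q) q.primeCompl f = LinearMap.range ιp := by
    rw [hιpdef, ← LinearMap.localized'_range_eq_range_localizedMap (Localization.AtPrime q) q.primeCompl fN f N.subtype,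
      Submodule.range_subtype]
  -- inclusion of Np into Kl
  have hmono : N.localized' (Localization.AtPrime q) q.primeCompl f ≤ K.localized' (Localization.AtPrime q) q.primeCompl f := by
    rintro x ⟨m, hm, s, rfl⟩
    exact ⟨m, hNK2 hm, s, rfl⟩
  have hjmem : ∀ y, ιp y ∈ K.localized' (Localization.AtPrime q) q.primeCompl f := by
    intro y
    apply hmono
    rw [hrange]
    exact ⟨y, rfl⟩
  set j : LocalizedModule q.primeCompl ↥N →ₗ[(Localization.AtPrime q)] ↥(K.localized' (Localization.AtPrime q) q.primeCompl f) :=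
    LinearMap.codRestrict (K.localized' (Localization.AtPrime q) q.primeCompl f) ιp hjmem with hjdef
  set πB : ↥(K.localized' (Localization.AtPrime q) q.primeCompl f) →ₗ[(Localization.AtPrime q)] LocalizedModule q.primeCompl ↥N :=
    πp ∘ₗ (K.localized' (Localization.AtPrime q) q.primeCompl f).subtype with hπBdef
  have hsplitB : πB ∘ₗ j = LinearMap.id := by
    apply LinearMap.ext
    intro y
    have : πp (ιp y) = y := LinearMap.congr_fun hπι y
    simpa [hπBdef, hjdef] using this
  have hfr := finrank_ker_add_of_split (T := (Localization.AtPrime q)) (M := ↥(K.localized' (Localization.AtPrime q) q.primeCompl f))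
    (B := LocalizedModule q.primeCompl ↥N) πB j hsplitB
  have hker0 : LinearMap.ker πB = ⊥ := hfr.2 (by omega)
  -- conclude
  intro x hx
  set xK : ↥(K.localized' (Localization.AtPrime q) q.primeCompl f) := ⟨x, hx⟩ with hxKdef
  have hmem : xK - j (πB xK) ∈ LinearMap.ker πB := by
    have : πB (j (πB xK)) = πB xK := LinearMap.congr_fun hsplitB (πB xK)
    simp [LinearMap.mem_ker, this]
  rw [hker0, Submodule.mem_bot, sub_eq_zero] at hmem
  rw [hrange]
  refine ⟨πB xK, ?_⟩
  have := congrArg Subtype.val hmem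
  simpa [hjdef] using this.symm
end SymBilSpace

end StatementFiveAux

/-- **Statement 5.** A symmetric bilinear space `(M, φ)` over a commutative ring `R` is
metabolic (has a direct summand `N` with `N = N^⊥`) if and only if it contains an isotropic
direct summand of half rank, i.e. a direct summand `N` with `φ(N,N) = 0` such that for every
prime `p` the rank of `M_p` is twice the rank of `N_p`. -/
theorem statement5 (R : Type) [CommRing R] (V : SymBilSpace R) :
    (∃ N : Submodule R V.M, (∃ P, IsCompl N P) ∧ N = orthComp V.form N) ↔
    (∃ N : Submodule R V.M, (∃ P, IsCompl N P) ∧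
      (∀ x ∈ N, ∀ y ∈ N, V.form x y = 0) ∧
      ∀ (p : Ideal R) (_ : p.IsPrime),
        Module.finrank (Localization.AtPrime p) (LocalizedModule p.primeCompl V.M)
          = 2 * Module.finrank (Localization.AtPrime p) (LocalizedModule p.primeCompl N)) := by
  constructor
  · rintro ⟨N, ⟨P, h⟩, hNK⟩
    refine ⟨N, ⟨P, h⟩, ?_, ?_⟩
    · intro x hx y hy
      have hx' : x ∈ orthComp V.form N := hNK ▸ hx
      exact hx' y hy
    · intro p hp
      haveI := hp
      have := V.rank_add h p
      rw [← hNK] at this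
      omega
  · rintro ⟨N, ⟨P, h⟩, hiso, hrank⟩
    exact ⟨N, ⟨P, h⟩, V.crux h hiso hrank⟩
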